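/- Let U, V₁, …, V_k be open ℝ₊-connected subsets of X. Then the set U ∪ ⋃_{i=1}^{k} (V_i ∩ ℝ₊(U ∩ V_i)) is ℝ₊-connected. (The k-set generalization of Lemma 1.17 of the paper, used in the proof of the refinement Lemma 1.16.) -/
import Mathlib


/-- The multiplicative group of positive real numbers. -/
abbrev Rpos : Type := {t : ℝ // 0 < t}

/-- The saturation `ℝ₊S = {t • x : t ∈ ℝ₊, x ∈ S}` of a set `S`. -/
def RposSat {X : Type*} [SMul Rpos X] (S : Set X) : Set X :=
  {y | ∃ (t : Rpos) (x : X), x ∈ S ∧ t • x = y}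

/-- A set `S` is `ℝ₊`-connected if its intersection with every orbit
`ℝ₊x = {t • x : t ∈ ℝ₊}` is connected or empty (i.e. preconnected). -/
def RposConnected {X : Type*} [TopologicalSpace X] [SMul Rpos X] (S : Set X) : Prop :=
  ∀ x : X, IsPreconnected (S ∩ Set.range (fun t : Rpos => t • x))

/-- Every orbit is contractible: for each `x`, either `x` is a fixed point of the action,
or the orbit map `t ↦ t • x` is a homeomorphism of `ℝ₊` onto the orbit `ℝ₊x` endowed with
its subspace topology (i.e. it is a topological embedding). -/
def OrbitHyp (X : Type*) [TopologicalSpace X] [SMul Rpos X] : Prop :=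
  ∀ x : X, (∀ t : Rpos, t • x = x) ∨ Topology.IsEmbedding (fun t : Rpos => t • x)

/-- Auxiliary: a union of a preconnected set `A` with preconnected sets `B i`,
each of which is empty or meets `A`, is preconnected. -/
theorem aux_preconnected_union {α : Type*} [TopologicalSpace α] {A : Set α} {ι : Sort*}
    {B : ι → Set α} (hA : IsPreconnected A) (hB : ∀ i, IsPreconnected (B i))
    (h : ∀ i, B i = ∅ ∨ (A ∩ B i).Nonempty) :
    IsPreconnected (A ∪ ⋃ i, B i) := by
  rcases A.eq_empty_or_nonempty with hAe | ⟨a, ha⟩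
  · have hBe : ∀ i, B i = ∅ := by
      intro i
      rcases h i with h' | ⟨z, hz⟩
      · exact h'
      · exact absurd hz.1 (by simp [hAe])
    simp only [hAe, hBe, Set.iUnion_empty, Set.union_empty, Set.empty_union]
    exact isPreconnected_empty
  · apply isPreconnected_of_forall a
    rintro y (hy | hy)
    · exact ⟨A, Set.subset_union_left, ha, hy, hA⟩
    · rcases Set.mem_iUnion.1 hy with ⟨i, hyi⟩
      rcases h i with h' | ⟨z, hz⟩
      · exact absurd hyi (by simp [h'])
      · refine ⟨A ∪ B i, ?_, Or.inl ha, Or.inr hyi,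
          IsPreconnected.union z hz.1 hz.2 hA (hB i)⟩
        exact Set.union_subset Set.subset_union_left
          ((Set.subset_iUnion B i).trans Set.subset_union_right)

/-- The `k`-set generalization of Lemma 1.17: if `U, V₁, …, V_k` are open
`ℝ₊`-connected subsets of `X`, then `U ∪ ⋃_{i=1}^{k} (V_i ∩ ℝ₊(U ∩ V_i))`
is `ℝ₊`-connected. -/
theorem stmt_3 {X : Type*} [TopologicalSpace X] [MulAction Rpos X] [ContinuousSMul Rpos X]
    (horb : OrbitHyp X) (U : Set X) (hUo : IsOpen U) (hUc : RposConnected U)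
    (k : ℕ) (V : Fin k → Set X) (hVo : ∀ i, IsOpen (V i)) (hVc : ∀ i, RposConnected (V i)) :
    RposConnected (U ∪ ⋃ i, (V i ∩ RposSat (U ∩ V i))) := by
  intro x
  set b : Set X := Set.range (fun t : Rpos => t • x) with hb
  -- membership in an orbit is stable under the action, and orbits of orbit points agree
  have hmemb : ∀ (t : Rpos) (y : X), y ∈ b → t • y ∈ b := by
    rintro t y ⟨s, rfl⟩
    exact ⟨t * s, mul_smul t s x⟩
  have hsubb : ∀ y ∈ b, b ⊆ Set.range (fun t : Rpos => t • y) := by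
    rintro y ⟨s, rfl⟩ z ⟨u, rfl⟩
    exact ⟨u * s⁻¹, by simp [mul_smul, ← mul_smul, smul_smul]⟩
  -- on the orbit b, each piece V i ∩ Sat(U ∩ V i) is either empty or equals V i ∩ b,
  -- meeting U ∩ b
  have key : ∀ i, (V i ∩ RposSat (U ∩ V i)) ∩ b = ∅ ∨
      ((V i ∩ RposSat (U ∩ V i)) ∩ b = V i ∩ b ∧ ((U ∩ b) ∩ (V i ∩ b)).Nonempty) := by
    intro i
    rcases Set.eq_empty_or_nonempty ((V i ∩ RposSat (U ∩ V i)) ∩ b) with he | ⟨y, hy⟩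
    · exact Or.inl he
    · right
      obtain ⟨⟨hyV, t, z, hzUV, hzy⟩, hyb⟩ := hy
      -- z lies on the orbit b
      have hzb : z ∈ b := by
        have := hmemb t⁻¹ y hyb
        rwa [← hzy, ← mul_smul, inv_mul_cancel, one_smul] at this
      constructor
      · apply Set.Subset.antisymm
        · exact Set.inter_subset_inter_left b (Set.inter_subset_left)
        · rintro w ⟨hwV, hwb⟩
          obtain ⟨u, rfl⟩ := hsubb z hzb hwb
          exact ⟨⟨hwV, u, z, hzUV, rfl⟩, hwb⟩
      · exact ⟨z, ⟨hzUV.1, hzb⟩, hzUV.2, hzb⟩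
  -- rewrite the intersection with the orbit as a union
  have hset : (U ∪ ⋃ i, (V i ∩ RposSat (U ∩ V i))) ∩ b =
      (U ∩ b) ∪ ⋃ i, ((V i ∩ RposSat (U ∩ V i)) ∩ b) := by
    rw [Set.union_inter_distrib_right, Set.iUnion_inter]
  rw [hset]
  apply aux_preconnected_union (hUc x)
  · intro i
    rcases key i with he | ⟨heq, _⟩
    · rw [he]; exact isPreconnected_empty
    · rw [heq]; exact hVc i x
  · intro i
    rcases key i with he | ⟨heq, hne⟩
    · exact Or.inl he
    · exact Or.inr (by rwa [heq])
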